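/- Define κ_ℓ = ((3α-2)/(2α))^α Σ_{m=0}^{ℓ} ((α-2)/(3α-2))^m ϖ_m ϖ_{ℓ-m}, where ϖ_k = (-1)^k binom(α, k) and 1 < α < 2. Then the κ_ℓ satisfy the recurrence: κ₀ = ((3α-2)/(2α))^α, κ₁ = (4α(1-α)/(3α-2)) κ₀, and for ℓ ≥ 2, ℓ(3α-2) κ_ℓ = 4(1-α)(α-ℓ+1) κ_{ℓ-1} + (α-2)(2α-ℓ+2) κ_{ℓ-2}. -/

import Mathlib

open Finset Real

/-- Generalized binomial coefficient `binom α ℓ = α(α-1)⋯(α-ℓ+1)/ℓ!`. -/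
noncomputable def gbinom (α : ℝ) (ℓ : ℕ) : ℝ :=
  (∏ j ∈ Finset.range ℓ, (α - j)) / (Nat.factorial ℓ)

/-- Grünwald–Letnikov coefficients `ϖ_ℓ = (-1)^ℓ binom(α, ℓ)`. -/
noncomputable def glCoeff (α : ℝ) (ℓ : ℕ) : ℝ := (-1) ^ ℓ * gbinom α ℓ

/-- The 2nd-order coefficients
`κ_ℓ = ((3α-2)/(2α))^α Σ_{m=0}^{ℓ} ((α-2)/(3α-2))^m ϖ_m ϖ_{ℓ-m}`. -/
noncomputable def kappa (α : ℝ) (ℓ : ℕ) : ℝ :=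
  ((3 * α - 2) / (2 * α)) ^ α *
    ∑ m ∈ Finset.range (ℓ + 1),
      ((α - 2) / (3 * α - 2)) ^ m * glCoeff α m * glCoeff α (ℓ - m)

noncomputable def Skap (α r : ℝ) (ℓ : ℕ) : ℝ :=
  ∑ m ∈ Finset.range (ℓ + 1), r ^ m * glCoeff α m * glCoeff α (ℓ - m)

noncomputable def Ukap (α r : ℝ) (ℓ : ℕ) : ℝ :=
  ∑ m ∈ Finset.range (ℓ + 1), (m : ℝ) * (r ^ m * glCoeff α m * glCoeff α (ℓ - m))

noncomputable def Vkap (α r : ℝ) (ℓ : ℕ) : ℝ :=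
  ∑ m ∈ Finset.range (ℓ + 1), ((ℓ : ℝ) - m) * (r ^ m * glCoeff α m * glCoeff α (ℓ - m))

lemma glCoeff_zero (α : ℝ) : glCoeff α 0 = 1 := by
  simp [glCoeff, gbinom]

lemma glCoeff_succ (α : ℝ) (k : ℕ) :
    ((k : ℝ) + 1) * glCoeff α (k + 1) = ((k : ℝ) - α) * glCoeff α k := by
  have hk : ((Nat.factorial k : ℝ)) ≠ 0 := by positivity
  have hk1 : ((Nat.factorial (k+1) : ℝ)) ≠ 0 := by positivity
  rw [glCoeff, glCoeff, gbinom, gbinom, Finset.prod_range_succ, Nat.factorial_succ]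
  push_cast
  field_simp
  ring

lemma E3 (α r : ℝ) (ℓ : ℕ) : (ℓ : ℝ) * Skap α r ℓ = Ukap α r ℓ + Vkap α r ℓ := by
  rw [Skap, Ukap, Vkap, Finset.mul_sum, ← Finset.sum_add_distrib]
  exact Finset.sum_congr rfl fun m _ => by ring

lemma E1 (α r : ℝ) (ℓ : ℕ) :
    Ukap α r (ℓ + 1) = r * (Ukap α r ℓ - α * Skap α r ℓ) := by
  have hsub : Ukap α r ℓ - α * Skap α r ℓ =
      ∑ i ∈ Finset.range (ℓ + 1), ((i : ℝ) - α) * (r ^ i * glCoeff α i * glCoeff α (ℓ - i)) := by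
    rw [Ukap, Skap, Finset.mul_sum, ← Finset.sum_sub_distrib]
    exact Finset.sum_congr rfl fun i _ => by ring
  rw [Ukap, Finset.sum_range_succ']
  simp only [Nat.cast_zero, zero_mul, add_zero]
  rw [hsub, Finset.mul_sum]
  refine Finset.sum_congr rfl fun i _ => ?_
  have h : ℓ + 1 - (i + 1) = ℓ - i := by omega
  rw [h]
  have := glCoeff_succ α i
  push_cast
  linear_combination (r ^ (i + 1) * glCoeff α (ℓ - i)) * this

lemma E2 (α r : ℝ) (ℓ : ℕ) :
    Vkap α r (ℓ + 1) = Vkap α r ℓ - α * Skap α r ℓ := by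
  have hsub : Vkap α r ℓ - α * Skap α r ℓ =
      ∑ m ∈ Finset.range (ℓ + 1), (((ℓ : ℝ) - m) - α) * (r ^ m * glCoeff α m * glCoeff α (ℓ - m)) := by
    rw [Vkap, Skap, Finset.mul_sum, ← Finset.sum_sub_distrib]
    exact Finset.sum_congr rfl fun m _ => by ring
  rw [hsub, Vkap, Finset.sum_range_succ]
  rw [show (((ℓ+1 : ℕ) : ℝ)) = (ℓ : ℝ) + 1 by push_cast; ring]
  rw [show ((ℓ:ℝ) + 1 - ((ℓ:ℝ)+1)) = 0 by ring, zero_mul, add_zero]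
  refine Finset.sum_congr rfl fun m hm => ?_
  have hmle : m ≤ ℓ := by simpa [Nat.lt_succ_iff] using Finset.mem_range.mp hm
  have h1 : ℓ + 1 - m = (ℓ - m) + 1 := by omega
  rw [h1]
  have hcast : ((ℓ - m : ℕ) : ℝ) = (ℓ : ℝ) - m := by
    push_cast [hmle]; ring
  have := glCoeff_succ α (ℓ - m)
  rw [hcast] at this
  linear_combination (r ^ m * glCoeff α m) * this

lemma Skap_rec (α r : ℝ) (n : ℕ) :
    ((n : ℝ) + 2) * Skap α r (n + 2) =
      (1 + r) * ((n : ℝ) + 1 - α) * Skap α r (n + 1) + r * (2 * α - n) * Skap α r n := by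
  have e3a := E3 α r (n + 2)
  have e3b := E3 α r (n + 1)
  have e3c := E3 α r n
  have e1a := E1 α r (n + 1)
  have e1b := E1 α r n
  have e2 := E2 α r (n + 1)
  have e2b := E2 α r n
  push_cast at e3a e3b e3c
  linear_combination e3a + e1a + e2 - e1b - (1 + r) * e3b + r * e3c - r * e2b

theorem kappa_recurrence (α : ℝ) (h1 : 1 < α) (h2 : α < 2) :
    kappa α 0 = ((3 * α - 2) / (2 * α)) ^ α ∧
    kappa α 1 = (4 * α * (1 - α) / (3 * α - 2)) * kappa α 0 ∧
    ∀ ℓ : ℕ, 2 ≤ ℓ →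
      (ℓ : ℝ) * (3 * α - 2) * kappa α ℓ =
        4 * (1 - α) * (α - ℓ + 1) * kappa α (ℓ - 1) +
          (α - 2) * (2 * α - ℓ + 2) * kappa α (ℓ - 2) := by
  have h3 : 3 * α - 2 ≠ 0 := by nlinarith
  set c := ((3 * α - 2) / (2 * α)) ^ α with hcdef
  set r := (α - 2) / (3 * α - 2) with hrdef
  have hk : ∀ ℓ, kappa α ℓ = c * Skap α r ℓ := fun ℓ => rfl
  have hS0 : Skap α r 0 = 1 := by simp [Skap, glCoeff_zero]
  refine ⟨?_, ?_, ?_⟩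
  · rw [hk, hS0, mul_one]
  · rw [hk, hk, hS0]
    have hg1 : glCoeff α 1 = -α := by
      simp [glCoeff, gbinom]
    have hS1 : Skap α r 1 = (1 + r) * glCoeff α 1 := by
      simp [Skap, Finset.sum_range_succ, glCoeff_zero]
      ring
    rw [hS1, hg1, hrdef]
    field_simp
    have h3' : α * 3 - 2 ≠ 0 := by contrapose! h3; linarith
    field_simp
    ring
  · intro ℓ hℓ
    obtain ⟨n, rfl⟩ : ∃ n, ℓ = n + 2 := ⟨ℓ - 2, by omega⟩
    have h1' : n + 2 - 1 = n + 1 := by omega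
    have h2' : n + 2 - 2 = n := by omega
    rw [h1', h2', hk, hk, hk]
    have key := Skap_rec α r n
    have hr1 : r * (3 * α - 2) = α - 2 := by
      rw [hrdef]; exact div_mul_cancel₀ _ h3
    push_cast
    linear_combination c * (3 * α - 2) * key +
      c * (((n : ℝ) + 1 - α) * Skap α r (n + 1) + (2 * α - (n : ℝ)) * Skap α r n) * hr1
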